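/- arXiv:1910.01251 — 9 statements merged into one kernel-verified Lean document; each statement's English description precedes it below -/
import Mathlib

section
/- Let n ≥ 1 and let μ : (Fin n × Fin n × Fin n) →₀ ℕ be an exponent vector of total degree n (i.e., ∑ μ = n). If the monomial X^μ is torus-invariant, then there exist permutations σ, τ of Fin n such that μ = ∑ i, single (i, σ i, τ i) 1; that is, every torus-invariant monomial of degree n is a maximum 3-dimensional matching monomial. -/
open MvPolynomial

/-- The scaling substitution `S_{a,b,c}`: the `ℂ`-algebra endomorphism of
`MvPolynomial (Fin n × Fin n × Fin n) ℂ` determined by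
`X (i,j,k) ↦ (a i * b j * c k) • X (i,j,k)`. -/
noncomputable def scaleSub {n : ℕ} (a b c : Fin n → ℂˣ) :
    MvPolynomial (Fin n × Fin n × Fin n) ℂ →ₐ[ℂ] MvPolynomial (Fin n × Fin n × Fin n) ℂ :=
  aeval fun v : Fin n × Fin n × Fin n =>
    (((a v.1 : ℂ) * (b v.2.1 : ℂ) * (c v.2.2 : ℂ))) • X v

/-- A polynomial is torus-invariant if it is fixed by all scaling substitutions `S_{a,b,c}`
with `∏ a = ∏ b = ∏ c = 1`; this encodes the natural action of
`ST_n(ℂ) × ST_n(ℂ) × ST_n(ℂ)` on `ℂ^n ⊗ ℂ^n ⊗ ℂ^n`. -/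
def TorusInvariant {n : ℕ} (p : MvPolynomial (Fin n × Fin n × Fin n) ℂ) : Prop :=
  ∀ a b c : Fin n → ℂˣ,
    (∏ i, a i) = 1 → (∏ j, b j) = 1 → (∏ k, c k) = 1 → scaleSub a b c p = p

/- ## Auxiliary lemmas -/

lemma aux_two_zpow (m : ℤ) (h : (2:ℂ)^m = 1) : m = 0 := by
  have h2 : ((2:ℝ):ℂ)^m = 1 := by push_cast; exact h
  rw [← Complex.ofReal_zpow] at h2
  have h3 : (2:ℝ)^m = 1 := by exact_mod_cast h2
  exact zpow_right_injective₀ (a := (2:ℝ)) (by norm_num) (by norm_num)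
    (show (2:ℝ)^m = (2:ℝ)^(0:ℤ) by simpa using h3)

lemma aux_prod_zpow {α : Type*} [Fintype α] (x : ℂ) (hx : x ≠ 0) (e : α → ℤ) :
    ∏ l, x ^ e l = x ^ (∑ l, e l) := by
  induction (Finset.univ : Finset α) using Finset.cons_induction with
  | empty => simp
  | cons a s ha ih => rw [Finset.prod_cons, Finset.sum_cons, ih, zpow_add₀ hx]

/-- If `∏ (a i)^(r i) = 1` whenever `∏ a i = 1`, then `r` is constant. -/
lemma aux_const (n : ℕ) (r : Fin n → ℕ)
    (h : ∀ a : Fin n → ℂˣ, (∏ i, a i) = 1 → ∏ i, (a i : ℂ) ^ r i = 1)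
    (i j : Fin n) : r i = r j := by
  rcases eq_or_ne i j with rfl | hij
  · rfl
  set u : ℂˣ := Units.mk0 2 two_ne_zero with hu
  set e : Fin n → ℤ := fun l => (if l = i then 1 else 0) - (if l = j then 1 else 0) with he
  have hsum : ∑ l, e l = 0 := by
    simp [he, Finset.sum_sub_distrib, Finset.sum_ite_eq']
  have ha : ∏ l, u ^ e l = 1 := by
    have huu : ∏ l, u ^ e l = u ^ (∑ l, e l) := by
      induction (Finset.univ : Finset (Fin n)) using Finset.cons_induction with
      | empty => simp
      | cons a s ha ih => rw [Finset.prod_cons, Finset.sum_cons, ih, zpow_add]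
    rw [huu, hsum, zpow_zero]
  have h1 := h (fun l => u ^ e l) ha
  have hval : ∀ l, ((u ^ e l : ℂˣ) : ℂ) ^ r l = (2:ℂ) ^ (e l * (r l : ℤ)) := by
    intro l
    rw [Units.val_zpow_eq_zpow_val, zpow_mul]
    norm_num [hu]
  rw [Finset.prod_congr rfl (fun l _ => hval l), aux_prod_zpow _ two_ne_zero] at h1
  have hm := aux_two_zpow _ h1
  have hsum2 : ∑ l, e l * (r l : ℤ) = (r i : ℤ) - (r j : ℤ) := by
    simp [he, sub_mul, Finset.sum_sub_distrib, ite_mul, Finset.sum_ite_eq']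
  rw [hsum2] at hm
  omega

/-- The key consequence of invariance: the scaling factor product is 1. -/
lemma aux_inv_prod {n : ℕ} (μ : (Fin n × Fin n × Fin n) →₀ ℕ)
    (hinv : TorusInvariant (monomial μ (1 : ℂ)))
    (a b c : Fin n → ℂˣ) (ha : (∏ i, a i) = 1) (hb : (∏ j, b j) = 1)
    (hc : (∏ k, c k) = 1) :
    ∏ v : Fin n × Fin n × Fin n, ((a v.1 : ℂ) * (b v.2.1 : ℂ) * (c v.2.2 : ℂ)) ^ μ v = 1 := by
  have h := hinv a b c ha hb hc
  set F : Fin n × Fin n × Fin n → ℂ := fun v => (a v.1 : ℂ) * (b v.2.1 : ℂ) * (c v.2.2 : ℂ)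
    with hF
  have key : scaleSub a b c (monomial μ (1:ℂ)) =
      C (∏ v ∈ μ.support, F v ^ μ v) * monomial μ 1 := by
    rw [scaleSub, aeval_monomial, map_one, one_mul, monomial_eq, map_one, one_mul]
    unfold Finsupp.prod
    beta_reduce
    rw [map_prod, ← Finset.prod_mul_distrib]
    refine Finset.prod_congr rfl fun v _ => ?_
    rw [smul_eq_C_mul, mul_pow, map_pow]
  rw [key] at h
  have hK : (∏ v ∈ μ.support, F v ^ μ v) = 1 := by
    have h2 : monomial μ ((∏ v ∈ μ.support, F v ^ μ v) * 1) = monomial μ (1:ℂ) := by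
      rw [← C_mul_monomial]; exact h
    have h3 := congrArg (fun p => coeff μ p) h2
    simpa [coeff_monomial] using h3
  rw [← hK]
  refine (Finset.prod_subset (Finset.subset_univ _) fun v _ hv => ?_).symm
  rw [Finsupp.notMem_support_iff.mp hv, pow_zero]

/-- A sum of naturals over a fintype equal to 1 is concentrated at one point. -/
lemma aux_sum_one {α : Type*} [Fintype α] [DecidableEq α] (g : α → ℕ) (h : ∑ x, g x = 1) :
    ∃ x0, g x0 = 1 ∧ ∀ y, y ≠ x0 → g y = 0 := by
  obtain ⟨x0, -, hx0⟩ := Finset.exists_ne_zero_of_sum_ne_zero (by omega :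
    ∑ x, g x ≠ 0)
  have h1 : g x0 ≤ 1 := h ▸ Finset.single_le_sum (fun i _ => Nat.zero_le _)
    (Finset.mem_univ x0)
  refine ⟨x0, by omega, fun y hy => ?_⟩
  have h2 : (∑ x ∈ ({y, x0} : Finset α), g x) ≤ ∑ x, g x :=
    Finset.sum_le_sum_of_subset (Finset.subset_univ _)
  rw [Finset.sum_pair hy] at h2
  omega

/-- Every torus-invariant monomial of degree `n` is a maximum 3-dimensional matching
monomial. -/
theorem invariant_monomial_of_degree_n_is_matching (n : ℕ) (hn : 1 ≤ n)
    (μ : (Fin n × Fin n × Fin n) →₀ ℕ) (hdeg : (μ.sum fun _ e => e) = n)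
    (hinv : TorusInvariant (monomial μ (1 : ℂ))) :
    ∃ σ τ : Equiv.Perm (Fin n),
      μ = ∑ i : Fin n, Finsupp.single (i, σ i, τ i) 1 := by
  -- total degree as an iterated sum
  have htot : (∑ i, ∑ j, ∑ k, μ (i, j, k)) = n := by
    have h1 : (μ.sum fun _ e => e) = ∑ i, ∑ j, ∑ k, μ (i, j, k) := by
      rw [Finsupp.sum_fintype _ _ (fun _ => rfl), Fintype.sum_prod_type]
      exact Finset.sum_congr rfl fun i _ => by rw [Fintype.sum_prod_type]
    rw [← h1]; exact hdeg
  -- the constancy-and-sum argument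
  have hsameval : ∀ (f : Fin n → ℕ), (∀ i j, f i = f j) → (∑ i, f i = n) →
      ∀ i, f i = 1 := by
    intro f hconst hsum i
    have h2 : ∑ j, f j = n * f i := by
      rw [Finset.sum_congr rfl fun j _ => hconst j i, Finset.sum_const, Finset.card_univ,
        Fintype.card_fin, smul_eq_mul]
    have h3 : n * f i = n := by rw [← h2]; exact hsum
    have h4 : n * f i = n * 1 := by rw [mul_one]; exact h3
    exact Nat.eq_of_mul_eq_mul_left (by omega) h4
  -- row sums are 1
  have hr1 : ∀ i, (∑ j, ∑ k, μ (i, j, k)) = 1 := by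
    refine hsameval _ (aux_const n _ fun a hpa => ?_) htot
    have h0 := aux_inv_prod μ hinv a 1 1 hpa (by simp) (by simp)
    simp only [Pi.one_apply, Units.val_one, mul_one] at h0
    rw [Fintype.prod_prod_type] at h0
    simp only [Finset.prod_pow_eq_pow_sum] at h0
    rw [← h0]
    refine Finset.prod_congr rfl fun i _ => ?_
    rw [Fintype.sum_prod_type]
  -- middle sums are 1
  have hm1 : ∀ j, (∑ i, ∑ k, μ (i, j, k)) = 1 := by
    refine hsameval _ (aux_const n _ fun b hpb => ?_) ?_
    · have h0 := aux_inv_prod μ hinv 1 b 1 (by simp) hpb (by simp)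
      simp only [Pi.one_apply, Units.val_one, one_mul, mul_one] at h0
      rw [Fintype.prod_prod_type] at h0
      have h2 : ∀ i : Fin n, (∏ w : Fin n × Fin n, ((b w.1 : ℂ)) ^ μ (i, w)) =
          ∏ j, ∏ k, ((b j : ℂ)) ^ μ (i, j, k) := fun i => Fintype.prod_prod_type _
      rw [Finset.prod_congr rfl fun i _ => h2 i, Finset.prod_comm] at h0
      simp only [Finset.prod_pow_eq_pow_sum] at h0
      exact h0
    · rw [Finset.sum_comm]; exact htot
  -- depth sums are 1
  have hd1 : ∀ k, (∑ i, ∑ j, μ (i, j, k)) = 1 := by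
    refine hsameval _ (aux_const n _ fun c hpc => ?_) ?_
    · have h0 := aux_inv_prod μ hinv 1 1 c (by simp) (by simp) hpc
      simp only [Pi.one_apply, Units.val_one, one_mul] at h0
      rw [Fintype.prod_prod_type] at h0
      have h2 : ∀ i : Fin n, (∏ w : Fin n × Fin n, ((c w.2 : ℂ)) ^ μ (i, w)) =
          ∏ k, ∏ j, ((c k : ℂ)) ^ μ (i, j, k) := by
        intro i
        rw [Fintype.prod_prod_type, Finset.prod_comm]
      rw [Finset.prod_congr rfl fun i _ => h2 i, Finset.prod_comm] at h0
      simp only [Finset.prod_pow_eq_pow_sum] at h0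
      exact h0
    · have h3 : (∑ k, ∑ i, ∑ j, μ (i, j, k)) = ∑ i, ∑ j, ∑ k, μ (i, j, k) :=
        calc (∑ k, ∑ i, ∑ j, μ (i, j, k)) = ∑ i, ∑ k, ∑ j, μ (i, j, k) := Finset.sum_comm
          _ = ∑ i, ∑ j, ∑ k, μ (i, j, k) :=
            Finset.sum_congr rfl fun i _ => Finset.sum_comm
      rw [h3]; exact htot
  -- extract the matching function
  have hexists : ∀ i : Fin n, ∃ p : Fin n × Fin n,
      μ (i, p.1, p.2) = 1 ∧ ∀ q : Fin n × Fin n, q ≠ p → μ (i, q.1, q.2) = 0 := by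
    intro i
    refine aux_sum_one (fun p : Fin n × Fin n => μ (i, p.1, p.2)) ?_
    rw [Fintype.sum_prod_type]
    exact hr1 i
  choose f hf1 hf2 using hexists
  -- injectivity of the two coordinate maps
  have hinj1 : Function.Injective fun i => (f i).1 := by
    intro i1 i2 h12
    by_contra hne
    simp only at h12
    have hle : ∀ i', (f i').1 = (f i1).1 → 1 ≤ ∑ k, μ (i', (f i1).1, k) := by
      intro i' hi'
      calc 1 = μ (i', (f i').1, (f i').2) := (hf1 i').symm
        _ = μ (i', (f i1).1, (f i').2) := by rw [hi']
        _ ≤ ∑ k, μ (i', (f i1).1, k) :=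
            Finset.single_le_sum (f := fun k => μ (i', (f i1).1, k))
              (fun k _ => Nat.zero_le _) (Finset.mem_univ _)
    have h1 := hle i1 rfl
    have h2 := hle i2 h12.symm
    have hpair : (∑ x ∈ ({i1, i2} : Finset (Fin n)), ∑ k, μ (x, (f i1).1, k)) ≤
        ∑ i, ∑ k, μ (i, (f i1).1, k) :=
      Finset.sum_le_sum_of_subset (Finset.subset_univ _)
    rw [Finset.sum_pair hne] at hpair
    have := hm1 (f i1).1
    omega
  have hinj2 : Function.Injective fun i => (f i).2 := by
    intro i1 i2 h12
    by_contra hne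
    simp only at h12
    have hle : ∀ i', (f i').2 = (f i1).2 → 1 ≤ ∑ j, μ (i', j, (f i1).2) := by
      intro i' hi'
      calc 1 = μ (i', (f i').1, (f i').2) := (hf1 i').symm
        _ = μ (i', (f i').1, (f i1).2) := by rw [hi']
        _ ≤ ∑ j, μ (i', j, (f i1).2) :=
            Finset.single_le_sum (f := fun j => μ (i', j, (f i1).2))
              (fun j _ => Nat.zero_le _) (Finset.mem_univ _)
    have h1 := hle i1 rfl
    have h2 := hle i2 h12.symm
    have hpair : (∑ x ∈ ({i1, i2} : Finset (Fin n)), ∑ j, μ (x, j, (f i1).2)) ≤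
        ∑ i, ∑ j, μ (i, j, (f i1).2) :=
      Finset.sum_le_sum_of_subset (Finset.subset_univ _)
    rw [Finset.sum_pair hne] at hpair
    have := hd1 (f i1).2
    omega
  refine ⟨Equiv.ofBijective _ (Finite.injective_iff_bijective.mp hinj1),
    Equiv.ofBijective _ (Finite.injective_iff_bijective.mp hinj2), ?_⟩
  ext v
  show μ v = (∑ i : Fin n, Finsupp.single (i, (f i).1, (f i).2) (1:ℕ)) v
  have hRHS : (∑ i : Fin n, Finsupp.single (i, (f i).1, (f i).2) (1:ℕ)) v =
      ∑ i : Fin n, (Finsupp.single (i, (f i).1, (f i).2) (1:ℕ)) v :=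
    map_sum (Finsupp.applyAddHom v) _ _
  rw [hRHS]
  rw [Finset.sum_eq_single v.1]
  · rw [Finsupp.single_apply]
    by_cases hc : ((f v.1).1, (f v.1).2) = v.2
    · have hcv : ((v.1 : Fin n), (f v.1).1, (f v.1).2) = v :=
        (congrArg (fun p => ((v.1 : Fin n), p)) hc).trans rfl
      rw [if_pos hcv]
      have h5 : μ (v.1, (f v.1).1, (f v.1).2) = 1 := hf1 v.1
      rw [hcv] at h5
      exact h5
    · rw [if_neg (fun hcon => hc (congrArg Prod.snd hcon))]
      have h6 := hf2 v.1 v.2 (fun hcon => hc (by rw [hcon]))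
      simpa using h6
  · intro i _ hi
    rw [Finsupp.single_apply, if_neg (fun hcon => hi (congrArg Prod.fst hcon))]
  · intro hcon
    exact absurd (Finset.mem_univ v.1) hcon
end

section
/- Let n ≥ 1 and let μ : (Fin n × Fin n × Fin n) →₀ ℕ be an exponent vector whose total degree d satisfies 0 < d < n. Then the monomial X^μ is not torus-invariant: there exist a, b, c : Fin n → ℂˣ with ∏ i, a i = ∏ j, b j = ∏ k, c k = 1 such that S_{a,b,c} (X^μ) ≠ X^μ. -/
open MvPolynomial

lemma scaleSub_monomial {n : ℕ} (a b c : Fin n → ℂˣ) (μ : (Fin n × Fin n × Fin n) →₀ ℕ) :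
    scaleSub a b c (monomial μ (1 : ℂ)) =
      C (μ.prod fun v e => ((a v.1 : ℂ) * (b v.2.1 : ℂ) * (c v.2.2 : ℂ)) ^ e) *
        monomial μ 1 := by
  rw [scaleSub, aeval_monomial, monomial_eq]
  simp only [Finsupp.prod, smul_eq_C_mul, mul_pow, ← C_pow, Finset.prod_mul_distrib, map_prod,
    map_one, one_mul]
  rw [← map_prod, Finset.prod_mul_distrib, Finset.prod_mul_distrib]

/-- A monomial `X^μ` of total degree `d` with `0 < d < n` is not torus-invariant. -/
theorem monomial_of_low_degree_not_invariant (n : ℕ) (hn : 1 ≤ n)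
    (μ : (Fin n × Fin n × Fin n) →₀ ℕ)
    (hd0 : 0 < μ.sum fun _ e => e) (hdn : (μ.sum fun _ e => e) < n) :
    ∃ a b c : Fin n → ℂˣ,
      (∏ i, a i) = 1 ∧ (∏ j, b j) = 1 ∧ (∏ k, c k) = 1 ∧
        scaleSub a b c (monomial μ (1 : ℂ)) ≠ monomial μ (1 : ℂ) := by
  have hsupp : μ.support.Nonempty := by
    rw [Finset.nonempty_iff_ne_empty]
    intro h
    simp [Finsupp.sum, h] at hd0
  obtain ⟨v₀, hv₀⟩ := hsupp
  set i₀ := v₀.1 with hi₀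
  have hcard : (μ.support.image Prod.fst).card < n := by
    calc (μ.support.image Prod.fst).card ≤ μ.support.card := Finset.card_image_le
      _ = ∑ v ∈ μ.support, 1 := (Finset.card_eq_sum_ones _)
      _ ≤ μ.sum fun _ e => e := Finset.sum_le_sum
          (fun v hv => Nat.one_le_iff_ne_zero.2 (Finsupp.mem_support_iff.1 hv))
      _ < n := hdn
  obtain ⟨i₁, hi₁⟩ : ∃ i, i ∉ μ.support.image Prod.fst := by
    by_contra h
    push_neg at h
    have : μ.support.image Prod.fst = Finset.univ := Finset.eq_univ_iff_forall.2 h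
    rw [this, Finset.card_univ, Fintype.card_fin] at hcard
    exact lt_irrefl _ hcard
  have hne : i₀ ≠ i₁ := fun h => hi₁ (h ▸ Finset.mem_image_of_mem Prod.fst hv₀)
  set u : ℂˣ := Units.mk0 2 two_ne_zero with hu
  set a : Fin n → ℂˣ := fun i => if i = i₀ then u else if i = i₁ then u⁻¹ else 1 with ha
  refine ⟨a, 1, 1, ?_, by simp, by simp, ?_⟩
  · have h1 : ∀ i ∈ Finset.univ, i ∉ ({i₀, i₁} : Finset (Fin n)) → a i = 1 := by
      intro i _ hi
      simp only [Finset.mem_insert, Finset.mem_singleton, not_or] at hi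
      simp [ha, hi.1, hi.2]
    rw [← Finset.prod_subset (Finset.subset_univ ({i₀, i₁} : Finset (Fin n))) h1,
      Finset.prod_pair hne]
    simp [ha, hne, hne.symm]
  · rw [scaleSub_monomial]
    set m : ℕ := ∑ v ∈ μ.support, if v.1 = i₀ then μ v else 0 with hm
    have ht : (μ.prod fun v e => ((a v.1 : ℂ) * ((1 : Fin n → ℂˣ) v.2.1 : ℂ) *
        ((1 : Fin n → ℂˣ) v.2.2 : ℂ)) ^ e) = (2 : ℂ) ^ m := by
      rw [hm, ← Finset.prod_pow_eq_pow_sum, Finsupp.prod]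
      apply Finset.prod_congr rfl
      intro v hv
      have hv1 : v.1 ≠ i₁ := fun h => hi₁ (h ▸ Finset.mem_image_of_mem _ hv)
      by_cases h : v.1 = i₀ <;> simp [ha, hu, h, hv1]
    rw [ht]
    intro h
    have hc := congrArg (coeff μ) h
    rw [coeff_C_mul, coeff_monomial, if_pos rfl, mul_one] at hc
    have hm1 : 1 ≤ m := by
      rw [hm]
      calc 1 ≤ μ v₀ := Nat.one_le_iff_ne_zero.2 (Finsupp.mem_support_iff.1 hv₀)
        _ = if v₀.1 = i₀ then μ v₀ else 0 := by rw [if_pos rfl]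
        _ ≤ _ := Finset.single_le_sum (f := fun v => if v.1 = i₀ then μ v else 0) (fun v _ => Nat.zero_le _) hv₀
    have h2 : (2 : ℕ) ^ m = 1 := by exact_mod_cast hc
    have := Nat.one_lt_two_pow (n := m) (by omega)
    omega
end

section
/- Let n ≥ 1 and let 0 < d < n. Every torus-invariant polynomial p ∈ MvPolynomial (Fin n × Fin n × Fin n) ℂ that is homogeneous of degree d is the zero polynomial; i.e., the natural action of ST_n(ℂ) × ST_n(ℂ) × ST_n(ℂ) on ℂ^n ⊗ ℂ^n ⊗ ℂ^n has no nonzero homogeneous invariants of degree strictly between 0 and n. -/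
open MvPolynomial

lemma coeff_aeval_smul {σ : Type*} (s : σ → ℂ) (p : MvPolynomial σ ℂ) (m : σ →₀ ℕ) :
    coeff m (aeval (fun v => s v • X v) p) =
      (∏ v ∈ m.support, s v ^ m v) * coeff m p := by
  classical
  conv_lhs => rw [p.as_sum, map_sum, coeff_sum]
  have key : ∀ m' : σ →₀ ℕ, (aeval (fun v => s v • X v) (monomial m' (coeff m' p)) : MvPolynomial σ ℂ)
      = (∏ v ∈ m'.support, s v ^ m' v) • monomial m' (coeff m' p) := by
    intro m'
    rw [aeval_monomial, Finsupp.prod]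
    simp_rw [smul_eq_C_mul, mul_pow, ← C_pow]
    rw [Finset.prod_mul_distrib, ← map_prod, algebraMap_eq, monomial_eq, Finsupp.prod]
    ring
  rw [Finset.sum_congr rfl fun m' _ => congrArg (coeff m) (key m')]
  simp only [coeff_smul, smul_eq_mul, coeff_monomial]
  rw [Finset.sum_eq_single m]
  · by_cases hm : m ∈ p.support
    · simp
    · simp [MvPolynomial.notMem_support_iff.mp hm]
  · intro b _ hb; simp [hb]
  · intro hm; simp [MvPolynomial.notMem_support_iff.mp hm]

/-- There are no nonzero torus-invariant homogeneous polynomials of degree strictly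
between `0` and `n`. -/
theorem no_invariants_of_low_degree (n : ℕ) (hn : 1 ≤ n) (d : ℕ) (hd0 : 0 < d) (hdn : d < n)
    (p : MvPolynomial (Fin n × Fin n × Fin n) ℂ)
    (hinv : TorusInvariant p) (hhom : p.IsHomogeneous d) :
    p = 0 := by
  ext m
  rw [coeff_zero]
  by_contra hc
  set e : Fin n → ℕ := fun i => ∑ q : Fin n × Fin n, m (i, q) with he
  have hsum : ∑ i, e i = d := by
    have hdeg : m.degree = d := by rw [Finsupp.degree_eq_weight_one]; exact hhom hc
    rw [← hdeg, Finsupp.degree_apply]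
    rw [Finset.sum_subset (Finset.subset_univ m.support)
      (fun x _ hx => Finsupp.notMem_support_iff.mp hx)]
    rw [Fintype.sum_prod_type]
  have hnc : ∃ i j : Fin n, e i ≠ e j := by
    by_contra h
    push_neg at h
    have hconst : ∀ i, e i = e ⟨0, hn⟩ := fun i => h i _
    have hne : n * e ⟨0, hn⟩ = d := by
      calc n * e ⟨0, hn⟩ = ∑ _i : Fin n, e ⟨0, hn⟩ := by
            simp [Finset.sum_const, Finset.card_univ, mul_comm]
        _ = ∑ i, e i := Finset.sum_congr rfl fun i _ => (hconst i).symm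
        _ = d := hsum
    rcases Nat.eq_zero_or_pos (e ⟨0, hn⟩) with h0 | h0
    · rw [h0, Nat.mul_zero] at hne
      omega
    · have : n ≤ n * e ⟨0, hn⟩ := Nat.le_mul_of_pos_right n h0
      omega
  obtain ⟨i0, i1, hne⟩ := hnc
  have hii : i0 ≠ i1 := fun h => hne (by rw [h])
  have hii' : i1 ≠ i0 := Ne.symm hii
  set u : ℂˣ := Units.mk0 2 two_ne_zero with hu
  set a : Fin n → ℂˣ := fun i => if i = i0 then u else if i = i1 then u⁻¹ else 1 with ha
  have prod_two : ∀ (M : Type) [inst : CommMonoid M] (g : Fin n → M),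
      (∀ i, i ≠ i0 → i ≠ i1 → g i = 1) → ∏ i, g i = g i0 * g i1 := by
    intro M _ g hg
    rw [← Finset.prod_subset (Finset.subset_univ ({i0, i1} : Finset (Fin n)))
      (fun x _ hx => by
        simp only [Finset.mem_insert, Finset.mem_singleton] at hx
        push_neg at hx
        exact hg x hx.1 hx.2)]
    exact Finset.prod_pair hii
  have haprod : (∏ i, a i) = 1 := by
    rw [prod_two ℂˣ a (fun i h1 h2 => by simp [ha, h1, h2])]
    simp [ha, hii, hii']
  have hfix := hinv a 1 1 haprod (by simp) (by simp)
  have hco : coeff m (scaleSub a 1 1 p) = coeff m p := by rw [hfix]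
  rw [scaleSub, coeff_aeval_smul] at hco
  simp only [Pi.one_apply, Units.val_one, mul_one] at hco
  have hfac : (∏ v ∈ m.support, ((a v.1 : ℂ)) ^ m v)
      = (u:ℂ) ^ e i0 * ((u:ℂ)⁻¹) ^ e i1 := by
    rw [Finset.prod_subset (Finset.subset_univ m.support)
      (fun x _ hx => by rw [Finsupp.notMem_support_iff.mp hx, pow_zero])]
    rw [Fintype.prod_prod_type]
    have inner : ∀ i : Fin n, ∏ q : Fin n × Fin n, ((a i : ℂ)) ^ m (i, q) = (a i : ℂ) ^ e i := by
      intro i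
      rw [he, Finset.prod_pow_eq_pow_sum]
    rw [Finset.prod_congr rfl fun i _ => inner i]
    rw [prod_two ℂ (fun i => (a i : ℂ) ^ e i) (fun i h1 h2 => by simp [ha, h1, h2])]
    simp [ha, hii, hii']
  rw [hfac] at hco
  have hF : (u:ℂ) ^ e i0 * ((u:ℂ)⁻¹) ^ e i1 = 1 :=
    mul_right_cancel₀ hc (by rw [one_mul]; exact hco)
  apply hne
  have h2 : (2:ℂ) ^ e i0 = (2:ℂ) ^ e i1 := by
    have hu2 : (u : ℂ) = 2 := rfl
    rw [hu2] at hF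
    rw [inv_pow, ← div_eq_mul_inv, div_eq_one_iff_eq (pow_ne_zero _ two_ne_zero)] at hF
    exact hF
  have hcast : ((2 ^ e i0 : ℕ) : ℂ) = ((2 ^ e i1 : ℕ) : ℂ) := by push_cast; exact h2
  exact Nat.pow_right_injective (le_refl 2) (Nat.cast_injective hcast)
end

section
/- For every n ≥ 1, the ℂ-submodule of ⊗^n ℂ^n consisting of all vectors v such that the n-fold tensor power of the linear map of g fixes v for every g ∈ SL_n(ℂ) (Matrix.SpecialLinearGroup (Fin n) ℂ) is exactly the ℂ-linear span of the alternating tensor alt_n; in particular this space of SL_n(ℂ)-invariant vectors is one-dimensional. -/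
open PiTensorProduct

/-- The alternating tensor `alt_N = ∑_{π ∈ S_N} sign(π) • (⨂ₜ i, e_{π i})` in the `N`-fold
tensor power of `ℂ^N`, where `e_j = Pi.single j 1` is the standard basis. -/
noncomputable def altTensor (N : ℕ) : PiTensorProduct ℂ (fun _ : Fin N => (Fin N → ℂ)) :=
  ∑ π : Equiv.Perm (Fin N), (Equiv.Perm.sign π : ℤ) •
    PiTensorProduct.tprod ℂ (fun i => Pi.single (π i) (1 : ℂ))

namespace AltAux

variable {n : ℕ}

/-- Basis tensors. -/
noncomputable def eT (n : ℕ) (f : Fin n → Fin n) :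
    PiTensorProduct ℂ (fun _ : Fin n => (Fin n → ℂ)) :=
  tprod ℂ fun i => Pi.single (f i) (1 : ℂ)

/-- Coordinate functionals. -/
noncomputable def phi (n : ℕ) (f : Fin n → Fin n) :
    PiTensorProduct ℂ (fun _ : Fin n => (Fin n → ℂ)) →ₗ[ℂ] ℂ :=
  PiTensorProduct.lift
    ((MultilinearMap.mkPiAlgebra ℂ (Fin n) ℂ).compLinearMap fun i => LinearMap.proj (f i))

lemma phi_tprod (f : Fin n → Fin n) (m : Fin n → (Fin n → ℂ)) :
    phi n f (tprod ℂ m) = ∏ i, m i (f i) := by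
  simp [phi]

lemma phi_eT (f g : Fin n → Fin n) :
    phi n f (eT n g) = if f = g then 1 else 0 := by
  rw [eT, phi_tprod]
  by_cases h : f = g
  · subst h; simp
  · rw [if_neg h]
    obtain ⟨i, hi⟩ := Function.ne_iff.1 h
    exact Finset.prod_eq_zero (Finset.mem_univ i) (Pi.single_eq_of_ne hi _)

lemma repr (v : PiTensorProduct ℂ (fun _ : Fin n => (Fin n → ℂ))) :
    v = ∑ f : Fin n → Fin n, phi n f v • eT n f := by
  have key : (∑ f : Fin n → Fin n, (phi n f).smulRight (eT n f)) = LinearMap.id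
      (R := ℂ) (M := PiTensorProduct ℂ (fun _ : Fin n => (Fin n → ℂ))) := by
    refine PiTensorProduct.ext (MultilinearMap.ext fun m => ?_)
    simp only [LinearMap.compMultilinearMap_apply, LinearMap.sum_apply,
      LinearMap.smulRight_apply, LinearMap.id_apply, phi_tprod]
    have hm : m = fun i => ∑ j, m i j • Pi.single (M := fun _ : Fin n => ℂ) j 1 := by
      funext i k
      simp [Pi.single_apply, Finset.sum_ite_eq', eq_comm]
    conv_rhs => rw [hm]
    rw [MultilinearMap.map_sum]
    refine Finset.sum_congr rfl fun r _ => ?_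
    rw [MultilinearMap.map_smul_univ]
    rfl
  have := congrArg (fun L => L v) key
  simp only [LinearMap.sum_apply, LinearMap.smulRight_apply, LinearMap.id_apply] at this
  exact this.symm


lemma toLin'_diagonal_single (t : Fin n → ℂ) (j : Fin n) :
    Matrix.toLin' (Matrix.diagonal t) (Pi.single j (1 : ℂ)) = t j • Pi.single (M := fun _ : Fin n => ℂ) j 1 := by
  funext k
  simp [Matrix.toLin'_apply, Matrix.mulVec_diagonal, Pi.single_apply]
  split <;> simp_all

lemma map_eT_diagonal (t : Fin n → ℂ) (f : Fin n → Fin n) :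
    PiTensorProduct.map (fun _ : Fin n => Matrix.toLin' (Matrix.diagonal t)) (eT n f)
      = (∏ i, t (f i)) • eT n f := by
  rw [eT, PiTensorProduct.map_tprod]
  have : (fun i => Matrix.toLin' (Matrix.diagonal t) (Pi.single (f i) (1 : ℂ)))
      = fun i => t (f i) • Pi.single (M := fun _ : Fin n => ℂ) (f i) 1 := by
    funext i; exact toLin'_diagonal_single t (f i)
  rw [this, MultilinearMap.map_smul_univ]

lemma phi_map_eq (v : PiTensorProduct ℂ (fun _ : Fin n => (Fin n → ℂ)))
    (g : Matrix (Fin n) (Fin n) ℂ)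
    (hv : PiTensorProduct.map (fun _ : Fin n => Matrix.toLin' g) v = v)
    (t : Fin n → ℂ) (hg : g = Matrix.diagonal t) (f : Fin n → Fin n) :
    phi n f v * ∏ i, t (f i) = phi n f v := by
  subst hg
  conv_lhs at hv => rw [repr v, map_sum]
  have := congrArg (phi n f) hv
  rw [map_sum] at this
  simp only [LinearMap.map_smul, map_eT_diagonal] at this
  simp only [smul_smul, LinearMap.map_smul, phi_eT, smul_eq_mul] at this
  rw [Finset.sum_eq_single f] at this
  · rw [if_pos rfl, mul_one] at this
    exact this
  · intro b _ hb
    rw [if_neg fun h => hb h.symm, mul_zero, mul_zero]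
  · intro h; exact absurd (Finset.mem_univ f) h

lemma coeff_eq_zero_of_not_bijective (hn : 1 ≤ n)
    (v : PiTensorProduct ℂ (fun _ : Fin n => (Fin n → ℂ)))
    (hv : ∀ g : Matrix.SpecialLinearGroup (Fin n) ℂ,
      PiTensorProduct.map
        (fun _ : Fin n => Matrix.toLin' (g : Matrix (Fin n) (Fin n) ℂ)) v = v)
    (f : Fin n → Fin n) (hf : ¬ Function.Bijective f) : phi n f v = 0 := by
  have hfs : ¬ Function.Surjective f := fun h =>
    hf ((Finite.surjective_iff_bijective).1 h)
  rw [Function.Surjective] at hfs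
  push_neg at hfs
  obtain ⟨b, hb⟩ := hfs
  set a : Fin n := f ⟨0, hn⟩ with ha
  have hab : a ≠ b := fun h => hb _ h
  set t : Fin n → ℂ := fun j => if j = a then 2 else if j = b then 2⁻¹ else 1 with ht
  have hdet : (Matrix.diagonal t).det = 1 := by
    rw [Matrix.det_diagonal]
    rw [← Finset.prod_subset (Finset.subset_univ ({a, b} : Finset (Fin n)))]
    · rw [Finset.prod_pair hab]
      simp [ht, hab, Ne.symm hab]
    · intro x _ hx
      simp only [Finset.mem_insert, Finset.mem_singleton, not_or] at hx
      simp [ht, hx.1, hx.2]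
  have key := phi_map_eq v _ (hv ⟨Matrix.diagonal t, hdet⟩) t rfl f
  set k := (Finset.univ.filter (fun i => f i = a)).card with hk
  have hprod : (∏ i, t (f i)) = 2 ^ k := by
    have : ∀ i, t (f i) = if f i = a then 2 else 1 := by
      intro i
      simp only [ht]
      by_cases h1 : f i = a
      · simp [h1]
      · simp [h1, hb i]
    simp only [this]
    rw [← Finset.prod_filter, Finset.prod_const, hk]
  rw [hprod] at key
  have hk1 : k ≠ 0 := by
    have : (⟨0, hn⟩ : Fin n) ∈ Finset.univ.filter (fun i => f i = a) := by
      simp [ha]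
    intro h
    rw [hk] at h
    exact absurd this (by simp [Finset.card_eq_zero.1 (by omega : (Finset.univ.filter (fun i => f i = a)).card = 0)])
  have h2k : (2 : ℂ) ^ k ≠ 1 := by
    intro h
    have h2 : ((2 ^ k : ℕ) : ℂ) = ((1 : ℕ) : ℂ) := by push_cast; simpa using h
    have h3 : (2 : ℕ) ^ k = 1 := Nat.cast_injective h2
    have := Nat.one_lt_two_pow_iff.2 hk1
    omega
  have hzero : phi n f v * ((2 : ℂ) ^ k - 1) = 0 := by
    rw [mul_sub, key]; ring
  exact (mul_eq_zero.1 hzero).resolve_right (sub_ne_zero.2 h2k)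

lemma sum_perm_eq (F : (Fin n → Fin n) → PiTensorProduct ℂ (fun _ : Fin n => (Fin n → ℂ)))
    (hF : ∀ f, ¬ Function.Bijective f → F f = 0) :
    ∑ f : Fin n → Fin n, F f = ∑ π : Equiv.Perm (Fin n), F ⇑π := by
  rw [← Finset.sum_filter_add_sum_filter_not Finset.univ Function.Bijective F]
  rw [Finset.sum_eq_zero (fun f hf => hF f (Finset.mem_filter.1 hf).2), add_zero]
  · symm
    refine Finset.sum_bij (fun (π : Equiv.Perm (Fin n)) _ => ⇑π) ?_ ?_ ?_ ?_
    · intro π _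
      exact Finset.mem_filter.2 ⟨Finset.mem_univ _, π.bijective⟩
    · intro π _ σ _ h
      exact Equiv.coe_inj.1 h
    · intro f hf
      refine ⟨Equiv.ofBijective f (Finset.mem_filter.1 hf).2, Finset.mem_univ _, rfl⟩
    · intro π _
      rfl

lemma repr_perm (hn : 1 ≤ n) (v : PiTensorProduct ℂ (fun _ : Fin n => (Fin n → ℂ)))
    (hv : ∀ g : Matrix.SpecialLinearGroup (Fin n) ℂ,
      PiTensorProduct.map
        (fun _ : Fin n => Matrix.toLin' (g : Matrix (Fin n) (Fin n) ℂ)) v = v) :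
    v = ∑ π : Equiv.Perm (Fin n), phi n ⇑π v • eT n ⇑π := by
  conv_lhs => rw [repr v]
  exact sum_perm_eq _ (fun f hf => by
    rw [coeff_eq_zero_of_not_bijective hn v hv f hf, zero_smul])

lemma perm_apply_inv_self (σ : Equiv.Perm (Fin n)) (x : Fin n) : σ (σ⁻¹ x) = x :=
  σ.apply_symm_apply x

lemma perm_inv_apply_self (σ : Equiv.Perm (Fin n)) (x : Fin n) : σ⁻¹ (σ x) = x :=
  σ.symm_apply_apply x

lemma toLin'_transvection_single (a b : Fin n) (j : Fin n) :
    Matrix.toLin' (Matrix.transvection a b (1 : ℂ)) (Pi.single j (1 : ℂ))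
      = Pi.single j 1 + if j = b then Pi.single a 1 else 0 := by
  funext k
  simp only [Matrix.toLin'_apply, Matrix.transvection, Matrix.add_mulVec,
    Matrix.one_mulVec, Matrix.mulVec_single, Pi.add_apply]
  by_cases hj : j = b
  · subst hj
    simp [Matrix.single, Pi.single_apply, Matrix.one_apply, eq_comm]
  · simp [Matrix.single, hj, Ne.symm hj, Matrix.one_apply, Pi.single_apply]

lemma map_eT_transvection (a b : Fin n) (π : Equiv.Perm (Fin n)) :
    PiTensorProduct.map (fun _ : Fin n => Matrix.toLin' (Matrix.transvection a b (1 : ℂ)))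
      (eT n ⇑π)
      = eT n ⇑π + eT n (Function.update ⇑π (π⁻¹ b) a) := by
  rw [eT, PiTensorProduct.map_tprod]
  have h1 : (fun i => Matrix.toLin' (Matrix.transvection a b (1 : ℂ))
      (Pi.single (π i) (1 : ℂ)))
      = Function.update (fun i => Pi.single (M := fun _ : Fin n => ℂ) (π i) 1) (π⁻¹ b)
          (Pi.single b 1 + Pi.single a 1) := by
    funext i
    rw [toLin'_transvection_single]
    by_cases hi : i = π⁻¹ b
    · subst hi
      rw [Function.update_self]
      simp [perm_apply_inv_self]
    · rw [Function.update_of_ne hi]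
      have : π i ≠ b := fun h => hi (by rw [← h]; simp)
      simp [this]
  rw [h1, MultilinearMap.map_update_add]
  congr 1
  · congr 1
    have : Pi.single (M := fun _ : Fin n => ℂ) b 1
        = (fun i => Pi.single (M := fun _ : Fin n => ℂ) (π i) 1) (π⁻¹ b) := by
      simp [perm_apply_inv_self]
    rw [this, Function.update_eq_self]
  · rw [eT]
    congr 1
    funext i
    by_cases hi : i = π⁻¹ b
    · subst hi; simp
    · rw [Function.update_of_ne hi, Function.update_of_ne hi]

lemma update_eq_iff (σ π₀ : Equiv.Perm (Fin n)) (p q : Fin n) (hpq : p ≠ q) :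
    Function.update ⇑σ (σ⁻¹ (π₀ q)) (π₀ p) = Function.update ⇑π₀ q (π₀ p)
      ↔ σ = π₀ ∨ σ = π₀ * Equiv.swap p q := by
  have hab : π₀ p ≠ π₀ q := fun h => hpq (π₀.injective h)
  constructor
  · intro h
    have hσj : σ (σ⁻¹ (π₀ q)) = π₀ q := perm_apply_inv_self σ _
    by_cases hjq : σ⁻¹ (π₀ q) = q
    · left
      refine Equiv.Perm.ext fun i => ?_
      by_cases hi : i = q
      · rw [hi, ← hjq, hσj, hjq]
      · have := congrFun h i
        rwa [Function.update_of_ne (by rw [hjq]; exact hi), Function.update_of_ne hi] at this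
    · right
      have h1 : π₀ (σ⁻¹ (π₀ q)) = π₀ p := by
        have := congrFun h (σ⁻¹ (π₀ q))
        rwa [Function.update_self, Function.update_of_ne hjq, eq_comm] at this
      have hjp : σ⁻¹ (π₀ q) = p := π₀.injective h1
      refine Equiv.Perm.ext fun i => ?_
      rw [Equiv.Perm.mul_apply]
      by_cases hi1 : i = q
      · have := congrFun h q
        rw [Function.update_of_ne (Ne.symm hjq), Function.update_self] at this
        rw [hi1, this, Equiv.swap_apply_right]
      · by_cases hi2 : i = p
        · rw [hi2, Equiv.swap_apply_left, ← hσj, hjp]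
        · rw [Equiv.swap_apply_of_ne_of_ne hi2 hi1]
          have := congrFun h i
          rwa [Function.update_of_ne (by rw [hjp]; exact hi2), Function.update_of_ne hi1] at this
  · rintro (rfl | rfl)
    · rw [perm_inv_apply_self]
    · have hinv : (π₀ * Equiv.swap p q)⁻¹ (π₀ q) = p := by
        rw [mul_inv_rev, Equiv.Perm.mul_apply, perm_inv_apply_self,
          Equiv.swap_inv, Equiv.swap_apply_right]
      rw [hinv]
      funext i
      by_cases hi1 : i = p
      · rw [hi1, Function.update_self, Function.update_of_ne hpq]
      · by_cases hi2 : i = q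
        · rw [hi2, Function.update_of_ne (Ne.symm hpq), Function.update_self,
            Equiv.Perm.mul_apply, Equiv.swap_apply_right]
        · rw [Function.update_of_ne hi1, Function.update_of_ne hi2,
            Equiv.Perm.mul_apply, Equiv.swap_apply_of_ne_of_ne hi1 hi2]

lemma swap_rel (hn : 1 ≤ n) (v : PiTensorProduct ℂ (fun _ : Fin n => (Fin n → ℂ)))
    (hv : ∀ g : Matrix.SpecialLinearGroup (Fin n) ℂ,
      PiTensorProduct.map
        (fun _ : Fin n => Matrix.toLin' (g : Matrix (Fin n) (Fin n) ℂ)) v = v)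
    (π₀ : Equiv.Perm (Fin n)) (p q : Fin n) (hpq : p ≠ q) :
    phi n ⇑π₀ v + phi n ⇑(π₀ * Equiv.swap p q) v = 0 := by
  set a := π₀ p with ha
  set b := π₀ q with hb
  have hab : a ≠ b := fun h => hpq (π₀.injective h)
  have hdet : (Matrix.transvection a b (1 : ℂ)).det = 1 :=
    Matrix.det_transvection_of_ne a b hab 1
  have hg := hv ⟨Matrix.transvection a b 1, hdet⟩
  have hrepr := repr_perm hn v hv
  have hmg : PiTensorProduct.map
      (fun _ : Fin n => Matrix.toLin' (Matrix.transvection a b (1 : ℂ))) v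
      = v + ∑ π : Equiv.Perm (Fin n),
          phi n ⇑π v • eT n (Function.update ⇑π (π⁻¹ b) a) := by
    conv_lhs => rw [hrepr]
    rw [map_sum]
    simp only [LinearMap.map_smul, map_eT_transvection, smul_add]
    rw [Finset.sum_add_distrib, ← hrepr]
  rw [hmg] at hg
  have hz : ∑ π : Equiv.Perm (Fin n),
      phi n ⇑π v • eT n (Function.update ⇑π (π⁻¹ b) a) = 0 := by
    have := hg
    rwa [add_eq_left] at this
  have hphi := congrArg (phi n (Function.update ⇑π₀ q a)) hz
  rw [map_sum, map_zero] at hphi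
  simp only [LinearMap.map_smul, phi_eT, smul_eq_mul] at hphi
  have hcond : ∀ σ : Equiv.Perm (Fin n),
      (Function.update ⇑π₀ q a = Function.update ⇑σ (σ⁻¹ b) a)
        ↔ σ ∈ ({π₀, π₀ * Equiv.swap p q} : Finset (Equiv.Perm (Fin n))) := by
    intro σ
    rw [eq_comm, update_eq_iff σ π₀ p q hpq]
    simp [Finset.mem_insert]
  have hne : π₀ ≠ π₀ * Equiv.swap p q := by
    intro h
    have h2 := congrArg (fun σ : Equiv.Perm (Fin n) => σ p) h
    simp only [Equiv.Perm.mul_apply, Equiv.swap_apply_left] at h2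
    exact hab h2
  simp only [mul_ite, mul_one, mul_zero] at hphi
  rw [Finset.sum_congr rfl (fun σ _ => if_congr (hcond σ) rfl rfl),
    Finset.sum_ite_mem, Finset.univ_inter, Finset.sum_pair hne] at hphi
  exact hphi

lemma phi_sign (hn : 1 ≤ n) (v : PiTensorProduct ℂ (fun _ : Fin n => (Fin n → ℂ)))
    (hv : ∀ g : Matrix.SpecialLinearGroup (Fin n) ℂ,
      PiTensorProduct.map
        (fun _ : Fin n => Matrix.toLin' (g : Matrix (Fin n) (Fin n) ℂ)) v = v)
    (π : Equiv.Perm (Fin n)) :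
    phi n ⇑π v = ((Equiv.Perm.sign π : ℤ) : ℂ) * phi n ⇑(1 : Equiv.Perm (Fin n)) v := by
  refine Equiv.Perm.swap_induction_on' π ?_ ?_
  · simp
  · intro f x y hxy ih
    have hrel := swap_rel hn v hv f x y hxy
    have : phi n ⇑(f * Equiv.swap x y) v = - phi n ⇑f v := by linear_combination hrel
    rw [this, ih, Equiv.Perm.sign_mul, Equiv.Perm.sign_swap hxy]
    push_cast
    ring

/-- The forward inclusion. -/
lemma mem_span_of_invariant (hn : 1 ≤ n)
    (v : PiTensorProduct ℂ (fun _ : Fin n => (Fin n → ℂ)))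
    (hv : ∀ g : Matrix.SpecialLinearGroup (Fin n) ℂ,
      PiTensorProduct.map
        (fun _ : Fin n => Matrix.toLin' (g : Matrix (Fin n) (Fin n) ℂ)) v = v) :
    v ∈ Submodule.span ℂ ({altTensor n} :
      Set (PiTensorProduct ℂ (fun _ : Fin n => (Fin n → ℂ)))) := by
  rw [Submodule.mem_span_singleton]
  refine ⟨phi n ⇑(1 : Equiv.Perm (Fin n)) v, ?_⟩
  conv_rhs => rw [repr_perm hn v hv]
  rw [altTensor, Finset.smul_sum]
  refine Finset.sum_congr rfl fun π _ => ?_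
  rw [phi_sign hn v hv π]
  rw [mul_comm, mul_smul, Int.cast_smul_eq_zsmul ℂ]
  rfl

lemma alt_apply_eq {M : Type*} [AddCommGroup M] [Module ℂ M]
    (f : (Fin n → ℂ) [⋀^Fin n]→ₗ[ℂ] M) (w : Fin n → (Fin n → ℂ)) :
    f w = (Pi.basisFun ℂ (Fin n)).det w • f ⇑(Pi.basisFun ℂ (Fin n)) := by
  have key : f = (LinearMap.toSpanSingleton ℂ M
      (f ⇑(Pi.basisFun ℂ (Fin n)))).compAlternatingMap (Pi.basisFun ℂ (Fin n)).det := by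
    refine Module.Basis.ext_alternating (Pi.basisFun ℂ (Fin n)) fun ind hinj => ?_
    let σ : Equiv.Perm (Fin n) := Equiv.ofBijective ind
      (Finite.injective_iff_bijective.1 hinj)
    have hind : (fun i => (Pi.basisFun ℂ (Fin n)) (ind i))
        = (fun i => (Pi.basisFun ℂ (Fin n)) i) ∘ ⇑σ := rfl
    rw [hind, AlternatingMap.map_perm, LinearMap.compAlternatingMap_apply,
      AlternatingMap.map_perm, Module.Basis.det_self, LinearMap.map_smul_of_tower,
      LinearMap.toSpanSingleton_apply, one_smul]
  conv_lhs => rw [key]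
  rw [LinearMap.compAlternatingMap_apply, LinearMap.toSpanSingleton_apply]

lemma altTensor_eq_alternatization :
    altTensor n = (MultilinearMap.alternatization
      (tprod ℂ (s := fun _ : Fin n => (Fin n → ℂ)))) (fun j => Pi.single j 1) := by
  rw [MultilinearMap.alternatization_apply, altTensor]
  refine Finset.sum_congr rfl fun σ _ => ?_
  rw [MultilinearMap.domDomCongr_apply, Units.smul_def]

lemma map_altTensor (g : Matrix (Fin n) (Fin n) ℂ) (hg : g.det = 1) :
    PiTensorProduct.map (fun _ : Fin n => Matrix.toLin' g) (altTensor n) = altTensor n := by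
  have h2 : PiTensorProduct.map (fun _ : Fin n => Matrix.toLin' g) (altTensor n)
      = (MultilinearMap.alternatization (tprod ℂ (s := fun _ : Fin n => (Fin n → ℂ))))
          (fun j => Matrix.toLin' g (Pi.single j 1)) := by
    rw [altTensor, map_sum, MultilinearMap.alternatization_apply]
    refine Finset.sum_congr rfl fun σ _ => ?_
    rw [map_zsmul, PiTensorProduct.map_tprod, MultilinearMap.domDomCongr_apply, Units.smul_def]
  rw [h2, alt_apply_eq]
  have hw : (fun j => Matrix.toLin' g (Pi.single j 1))
      = ⇑(Matrix.toLin' g) ∘ ⇑(Pi.basisFun ℂ (Fin n)) := by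
    funext j; simp [Pi.basisFun_apply]
  rw [hw, Module.Basis.det_comp, Module.Basis.det_self, LinearMap.det_toLin', hg, mul_one, one_smul,
    altTensor_eq_alternatization]
  congr 1
  funext j
  simp [Pi.basisFun_apply]

end AltAux

/-- The set of `SL_n(ℂ)`-invariant vectors in the `n`-fold tensor power of `ℂ^n` is exactly
the `ℂ`-linear span of the alternating tensor `alt_n`. -/
theorem invariant_vectors_eq_span_altTensor (n : ℕ) (hn : 1 ≤ n) :
    {v : PiTensorProduct ℂ (fun _ : Fin n => (Fin n → ℂ)) |
        ∀ g : Matrix.SpecialLinearGroup (Fin n) ℂ,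
          PiTensorProduct.map
            (fun _ : Fin n => Matrix.toLin' (g : Matrix (Fin n) (Fin n) ℂ)) v = v}
      = ↑(Submodule.span ℂ ({altTensor n} :
          Set (PiTensorProduct ℂ (fun _ : Fin n => (Fin n → ℂ))))) := by
  ext v
  simp only [Set.mem_setOf_eq, SetLike.mem_coe]
  constructor
  · exact fun hv => AltAux.mem_span_of_invariant hn v hv
  · intro h g
    obtain ⟨c, rfl⟩ := Submodule.mem_span_singleton.1 h
    rw [map_smul, AltAux.map_altTensor _ g.2]
end

section
/- Let n ≥ 1 and m ≥ 0 with n not dividing m. If v ∈ ⊗^m ℂ^n is fixed by the m-fold tensor power of the linear map of g for every g ∈ SL_n(ℂ), then v = 0; i.e., ⊗^m ℂ^n contains no nonzero SL_n(ℂ)-invariant vector unless n ∣ m. -/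
open PiTensorProduct

/-- If `n` does not divide `m`, then the `m`-fold tensor power of `ℂ^n` contains no nonzero
`SL_n(ℂ)`-invariant vector. -/
theorem no_invariant_vectors_of_not_dvd (n m : ℕ) (hn : 1 ≤ n) (hnm : ¬ n ∣ m)
    (v : PiTensorProduct ℂ (fun _ : Fin m => (Fin n → ℂ)))
    (hv : ∀ g : Matrix.SpecialLinearGroup (Fin n) ℂ,
      PiTensorProduct.map
        (fun _ : Fin m => Matrix.toLin' (g : Matrix (Fin n) (Fin n) ℂ)) v = v) :
    v = 0 := by
  have hn0 : n ≠ 0 := by omega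
  set ζ : ℂ := Complex.exp (2 * Real.pi * Complex.I / n) with hζdef
  have hprim : IsPrimitiveRoot ζ n := Complex.isPrimitiveRoot_exp n hn0
  have hdet : (ζ • (1 : Matrix (Fin n) (Fin n) ℂ)).det = 1 := by
    simp [Matrix.det_smul, hprim.pow_eq_one]
  let g : Matrix.SpecialLinearGroup (Fin n) ℂ := ⟨ζ • 1, hdet⟩
  have hlin : Matrix.toLin' ((g : Matrix (Fin n) (Fin n) ℂ)) = ζ • LinearMap.id := by
    show Matrix.toLin' (ζ • (1 : Matrix (Fin n) (Fin n) ℂ)) = _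
    rw [map_smul, Matrix.toLin'_one]
  have key : ∀ w : PiTensorProduct ℂ (fun _ : Fin m => (Fin n → ℂ)), PiTensorProduct.map
      (fun _ : Fin m => Matrix.toLin' ((g : Matrix (Fin n) (Fin n) ℂ))) w = ζ ^ m • w := by
    intro w
    induction w using PiTensorProduct.induction_on with
    | smul_tprod c f =>
        rw [map_smul, PiTensorProduct.map_tprod]
        simp only [hlin, LinearMap.smul_apply, LinearMap.id_coe, id_eq]
        rw [MultilinearMap.map_smul_univ]
        simp [smul_smul, mul_comm]
    | add x y hx hy => rw [map_add, hx, hy, smul_add]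
  have heq := hv g
  rw [key] at heq
  have hne : ζ ^ m ≠ 1 := fun h => hnm ((hprim.pow_eq_one_iff_dvd m).mp h)
  have hz : (ζ ^ m - 1) • v = 0 := sub_smul (ζ ^ m) 1 v ▸ by rw [one_smul, heq, sub_self]
  rcases smul_eq_zero.mp hz with h | h
  · exact absurd (by linear_combination h) hne
  · exact h
end

section
/- Let n ≥ 1 and m ≥ 1. There exists a nonzero vector v ∈ ⊗^m ℂ^n that is SL_n(ℂ)-invariant if and only if n divides m. -/
open PiTensorProduct

noncomputable section

private def epsAlt (n : ℕ) :
    AlternatingMap ℂ (Fin n → ℂ) (PiTensorProduct ℂ (fun _ : Fin n => (Fin n → ℂ))) (Fin n) :=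
  MultilinearMap.alternatization (PiTensorProduct.tprod ℂ)

private def eps (n : ℕ) : PiTensorProduct ℂ (fun _ : Fin n => (Fin n → ℂ)) :=
  epsAlt n (Pi.basisFun ℂ (Fin n))

private theorem epsAlt_eq (n : ℕ) (w : Fin n → (Fin n → ℂ)) :
    epsAlt n w = (Pi.basisFun ℂ (Fin n)).det w • eps n := by
  have h : epsAlt n = (LinearMap.toSpanSingleton ℂ _ (eps n)).compAlternatingMap
      ((Pi.basisFun ℂ (Fin n)).det) := by
    refine Module.Basis.ext_alternating (Pi.basisFun ℂ (Fin n)) (fun v hv => ?_)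
    have hb : Function.Bijective v := (Finite.injective_iff_bijective).mp hv
    set σ : Equiv.Perm (Fin n) := Equiv.ofBijective v hb with hσ
    have hve : (fun i => (Pi.basisFun ℂ (Fin n)) (v i)) =
        (fun i => (Pi.basisFun ℂ (Fin n)) i) ∘ σ := rfl
    rw [hve, AlternatingMap.map_perm, AlternatingMap.map_perm]
    congr 1
    simp only [LinearMap.compAlternatingMap_apply, LinearMap.toSpanSingleton_apply]
    have hc : (fun i : Fin n => (Pi.basisFun ℂ (Fin n)) i) = ⇑(Pi.basisFun ℂ (Fin n)) := rfl
    rw [hc, Module.Basis.det_self, one_smul, eps]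
  rw [h]
  rfl

private theorem det_cols (n : ℕ) (g : Matrix (Fin n) (Fin n) ℂ) :
    (Pi.basisFun ℂ (Fin n)).det (fun i => Matrix.toLin' g ((Pi.basisFun ℂ (Fin n)) i)) = g.det := by
  rw [Module.Basis.det_apply]
  congr 1
  ext i j
  simp [Module.Basis.toMatrix_apply, Matrix.toLin'_apply, Matrix.mulVec_single]

private theorem map_eps (n : ℕ) (g : Matrix (Fin n) (Fin n) ℂ) :
    PiTensorProduct.map (fun _ : Fin n => Matrix.toLin' g) (eps n) = g.det • eps n := by
  have h1 : PiTensorProduct.map (fun _ : Fin n => Matrix.toLin' g) (eps n)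
      = epsAlt n (fun i => Matrix.toLin' g ((Pi.basisFun ℂ (Fin n)) i)) := by
    simp only [eps, epsAlt, MultilinearMap.alternatization_apply,
      MultilinearMap.domDomCongr_apply, map_sum]
    refine Finset.sum_congr rfl (fun σ _ => ?_)
    rw [Units.smul_def, Units.smul_def, map_zsmul, PiTensorProduct.map_tprod]
  rw [h1, epsAlt_eq, det_cols]

private def pairF (n : ℕ) : PiTensorProduct ℂ (fun _ : Fin n => (Fin n → ℂ)) →ₗ[ℂ] ℂ :=
  PiTensorProduct.lift
    ((MultilinearMap.mkPiAlgebra ℂ (Fin n) ℂ).compLinearMap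
      (fun i => LinearMap.proj i))

private theorem pairF_eps (n : ℕ) : pairF n (eps n) = 1 := by
  classical
  have h : pairF n (eps n) = ∑ σ : Equiv.Perm (Fin n),
      Equiv.Perm.sign σ • ∏ i, ((Pi.basisFun ℂ (Fin n)) (σ i)) i := by
    simp only [eps, epsAlt, MultilinearMap.alternatization_apply,
      MultilinearMap.domDomCongr_apply, map_sum]
    refine Finset.sum_congr rfl (fun σ _ => ?_)
    rw [Units.smul_def, Units.smul_def, map_zsmul]
    simp [pairF, PiTensorProduct.lift.tprod, MultilinearMap.compLinearMap_apply,
      MultilinearMap.mkPiAlgebra_apply]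
  rw [h, Finset.sum_eq_single_of_mem (1 : Equiv.Perm (Fin n)) (Finset.mem_univ _)]
  · simp [Pi.basisFun_apply]
  · intro σ _ hσ
    obtain ⟨i, hi⟩ : ∃ i, σ i ≠ i := by
      by_contra hc
      push_neg at hc
      exact hσ (Equiv.ext hc)
    have : ((Pi.basisFun ℂ (Fin n)) (σ i)) i = 0 := by
      simp [Pi.basisFun_apply, Pi.single_apply, (Ne.symm hi)]
    rw [show (∏ i, ((Pi.basisFun ℂ (Fin n)) (σ i)) i) = 0 from
      Finset.prod_eq_zero (Finset.mem_univ i) this]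
    simp

private theorem eps_ne_zero (n : ℕ) : eps n ≠ 0 := by
  intro h
  have := pairF_eps n
  rw [h, map_zero] at this
  exact zero_ne_one (α := ℂ) this

private theorem tmul_ne_zero' {M N : Type*} [AddCommGroup M] [AddCommGroup N]
    [Module ℂ M] [Module ℂ N] {x : M} {y : N} (hx : x ≠ 0) (hy : y ≠ 0) :
    x ⊗ₜ[ℂ] y ≠ 0 := by
  obtain ⟨φ, hφ⟩ : ∃ φ : Module.Dual ℂ M, φ x ≠ 0 := by
    by_contra hc
    push_neg at hc
    exact hx ((Module.forall_dual_apply_eq_zero_iff ℂ x).mp hc)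
  obtain ⟨ψ, hψ⟩ : ∃ ψ : Module.Dual ℂ N, ψ y ≠ 0 := by
    by_contra hc
    push_neg at hc
    exact hy ((Module.forall_dual_apply_eq_zero_iff ℂ y).mp hc)
  intro h
  have h2 : (TensorProduct.lid ℂ ℂ) (TensorProduct.map φ ψ (x ⊗ₜ[ℂ] y)) = φ x * ψ y := by
    simp [TensorProduct.map_tmul]
  rw [h, map_zero, map_zero] at h2
  exact mul_ne_zero hφ hψ h2.symm

set_option synthInstance.maxHeartbeats 1000000 in
private theorem map_tmulEquiv {n a b : ℕ} (f : (Fin n → ℂ) →ₗ[ℂ] (Fin n → ℂ))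
    (x : PiTensorProduct ℂ (fun _ : Fin a => (Fin n → ℂ)))
    (y : PiTensorProduct ℂ (fun _ : Fin b => (Fin n → ℂ))) :
    PiTensorProduct.map (fun _ : Fin a ⊕ Fin b => f)
        (PiTensorProduct.tmulEquiv ℂ (Fin n → ℂ) (x ⊗ₜ[ℂ] y))
      = PiTensorProduct.tmulEquiv ℂ (Fin n → ℂ)
        ((PiTensorProduct.map (fun _ : Fin a => f) x) ⊗ₜ[ℂ]
          (PiTensorProduct.map (fun _ : Fin b => f) y)) := by
  induction x using PiTensorProduct.induction_on with
  | smul_tprod r u =>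
    induction y using PiTensorProduct.induction_on with
    | smul_tprod s w =>
      simp only [TensorProduct.smul_tmul, TensorProduct.tmul_smul, map_smul]
      rw [PiTensorProduct.tmulEquiv_apply, PiTensorProduct.map_tprod,
        PiTensorProduct.map_tprod, PiTensorProduct.map_tprod, PiTensorProduct.tmulEquiv_apply]
      have : (fun i => f (Sum.elim u w i))
          = fun i => Sum.elim (fun i => f (u i)) (fun i => f (w i)) i := by
        funext i; cases i <;> rfl
      rw [this]
    | add y1 y2 h1 h2 =>
      simp only [TensorProduct.tmul_add, map_add, h1, h2]
  | add x1 x2 h1 h2 =>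
    simp only [TensorProduct.add_tmul, map_add, h1, h2]
end

/-- For `n, m ≥ 1`, there exists a nonzero `SL_n(ℂ)`-invariant vector in the `m`-fold tensor
power of `ℂ^n` if and only if `n` divides `m`. -/
theorem exists_invariant_vector_iff_dvd (n m : ℕ) (hn : 1 ≤ n) (hm : 1 ≤ m) :
    (∃ v : PiTensorProduct ℂ (fun _ : Fin m => (Fin n → ℂ)),
      v ≠ 0 ∧
        ∀ g : Matrix.SpecialLinearGroup (Fin n) ℂ,
          PiTensorProduct.map
            (fun _ : Fin m => Matrix.toLin' (g : Matrix (Fin n) (Fin n) ℂ)) v = v)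
      ↔ n ∣ m := by
  constructor
  · rintro ⟨v, hv, hinv⟩
    have hn0 : n ≠ 0 := by omega
    set ζ := Complex.exp (2 * Real.pi * Complex.I / n) with hζdef
    have hζ : IsPrimitiveRoot ζ n := Complex.isPrimitiveRoot_exp n hn0
    have hdet : (ζ • (1 : Matrix (Fin n) (Fin n) ℂ)).det = 1 := by
      rw [Matrix.det_smul, Matrix.det_one, mul_one]
      simpa using hζ.pow_eq_one
    set g : Matrix.SpecialLinearGroup (Fin n) ℂ := ⟨ζ • 1, hdet⟩ with hgdef
    have hml : PiTensorProduct.map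
        (fun _ : Fin m => Matrix.toLin' ((g : Matrix (Fin n) (Fin n) ℂ)))
        = ζ ^ m • LinearMap.id := by
      apply PiTensorProduct.ext
      apply MultilinearMap.ext
      intro x
      simp only [LinearMap.compMultilinearMap_apply, PiTensorProduct.map_tprod,
        LinearMap.smul_apply, LinearMap.id_apply]
      have hx : (fun i : Fin m => Matrix.toLin' ((g : Matrix (Fin n) (Fin n) ℂ)) (x i))
          = fun i => ζ • x i := by
        funext i
        simp [hgdef, Matrix.toLin'_apply, Matrix.smul_mulVec, Matrix.one_mulVec]
      rw [hx, MultilinearMap.map_smul_univ]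
      simp
    have key : ζ ^ m • v = v := by
      conv_rhs => rw [← hinv g]
      rw [hml]
      simp
    have hpow : ζ ^ m = 1 := by
      refine smul_left_injective ℂ hv ?_
      simpa using key
    exact hζ.dvd_of_pow_eq_one m hpow
  · rintro ⟨k, hk⟩
    set Q : ℕ → Prop := fun a =>
      ∃ v : PiTensorProduct ℂ (fun _ : Fin a => (Fin n → ℂ)),
        v ≠ 0 ∧
          ∀ g : Matrix.SpecialLinearGroup (Fin n) ℂ,
            PiTensorProduct.map
              (fun _ : Fin a => Matrix.toLin' (g : Matrix (Fin n) (Fin n) ℂ)) v = v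
      with hQ
    have hQn : Q n := by
      refine ⟨eps n, eps_ne_zero n, fun g => ?_⟩
      rw [map_eps n (g : Matrix (Fin n) (Fin n) ℂ), g.prop, one_smul]
    have hadd : ∀ a b : ℕ, Q a → Q b → Q (a + b) := by
      rintro a b ⟨va, hva, hia⟩ ⟨vb, hvb, hib⟩
      refine ⟨PiTensorProduct.reindex ℂ (fun _ : Fin a ⊕ Fin b => (Fin n → ℂ)) finSumFinEquiv
        (PiTensorProduct.tmulEquiv ℂ (Fin n → ℂ) (va ⊗ₜ[ℂ] vb)), ?_, ?_⟩
      · rw [LinearEquiv.map_ne_zero_iff, LinearEquiv.map_ne_zero_iff]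
        exact tmul_ne_zero' hva hvb
      · intro g
        have h2 := PiTensorProduct.map_reindex
          (fun _ : Fin a ⊕ Fin b => Matrix.toLin' (g : Matrix (Fin n) (Fin n) ℂ))
          finSumFinEquiv (PiTensorProduct.tmulEquiv ℂ (Fin n → ℂ) (va ⊗ₜ[ℂ] vb))
        refine h2.trans ?_
        rw [map_tmulEquiv, hia g, hib g]
    have hQmul : ∀ k : ℕ, 1 ≤ k → Q (n * k) := by
      intro k hk1
      induction k, hk1 using Nat.le_induction with
      | base => rw [Nat.mul_one]; exact hQn
      | succ k hk1 ih => rw [Nat.mul_succ]; exact hadd _ _ ih hQn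
    have hk1 : 1 ≤ k := by
      rcases Nat.eq_zero_or_pos k with h | h
      · subst h; omega
      · exact h
    rw [hk]
    exact hQmul k hk1
end

section
/- Let k ≥ 1, n ≥ 1 and set N = 2kn. Identify the index set Fin N with Fin n × Fin (2k) via a fixed equivalence (block m of size 2k consists of the pairs (m, t)). For every permutation π ∈ Equiv.Perm (Fin n), the block permutation σ_π ∈ Equiv.Perm (Fin n × Fin (2k)) given by σ_π (m, t) = (π m, t) has sign 1, and consequently the factor-permutation of the alternating tensor alt_N ∈ ⊗^{Fin n × Fin 2k} ℂ^N by σ_π fixes alt_N; i.e., alt_N, viewed as an n-fold tensor of blocks of 2k factors, is a symmetric tensor. -/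
open PiTensorProduct

/-- The alternating tensor in the tensor power of `ℂ^N` indexed by a finite type `ι`
identified with `Fin N` via an equivalence `e`:
`∑_{π ∈ S_N} sign(π) • (the elementary tensor whose factor at `i : ι` is `e_{π (e i)}`)`. -/
noncomputable def altTensorIdx {ι : Type} [Fintype ι] (N : ℕ) (e : ι ≃ Fin N) :
    PiTensorProduct ℂ (fun _ : ι => (Fin N → ℂ)) :=
  ∑ π : Equiv.Perm (Fin N), (Equiv.Perm.sign π : ℤ) •
    PiTensorProduct.tprod ℂ (fun i => Pi.single (π (e i)) (1 : ℂ))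

lemma altTensorIdx_reindex_fixed {ι : Type} [Fintype ι] [DecidableEq ι] (N : ℕ)
    (e : ι ≃ Fin N) (σ : Equiv.Perm ι) (hσ : Equiv.Perm.sign σ = 1) :
    PiTensorProduct.reindex ℂ (fun _ : ι => (Fin N → ℂ)) σ (altTensorIdx N e)
      = altTensorIdx N e := by
  set τ : Equiv.Perm (Fin N) := (e.symm.trans σ.symm).trans e with hτdef
  have hτ : Equiv.Perm.sign τ = 1 := by
    rw [hτdef, Equiv.Perm.sign_symm_trans_trans, Equiv.Perm.sign_symm, hσ]
  unfold altTensorIdx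
  rw [map_sum]
  refine Fintype.sum_equiv (Equiv.mulRight τ) _ _ fun π => ?_
  rw [map_zsmul, reindex_tprod]
  have h1 : Equiv.Perm.sign (π * τ) = Equiv.Perm.sign π := by
    rw [_root_.map_mul, hτ, mul_one]
  simp only [Equiv.coe_mulRight, h1]
  have h2 : ∀ i, (π * τ) (e i) = π (e (σ.symm i)) := fun i => by
    simp [hτdef, Equiv.Perm.mul_apply]
  simp only [h2]

/-- For the block identification `Fin n × Fin (2k) ≃ Fin (2kn)` (block `m` of size `2k`
consists of the pairs `(m, t)`), the block permutation `σ_π : (m, t) ↦ (π m, t)` induced by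
any `π ∈ S_n` has sign `1`, and permuting the tensor factors of the alternating tensor
`alt_{2kn}` by `σ_π` fixes it: `alt_{2kn}` is a symmetric tensor in its `n` blocks. -/
theorem altTensor_block_symmetric (k n : ℕ) (hk : 1 ≤ k) (hn : 1 ≤ n)
    (π : Equiv.Perm (Fin n)) :
    Equiv.Perm.sign (Equiv.prodCongr π (Equiv.refl (Fin (2 * k)))) = 1 ∧
    PiTensorProduct.reindex ℂ (fun _ : Fin n × Fin (2 * k) => (Fin (2 * k * n) → ℂ))
        (Equiv.prodCongr π (Equiv.refl (Fin (2 * k))))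
        (altTensorIdx (2 * k * n)
          (finProdFinEquiv.trans (finCongr (by ring : n * (2 * k) = 2 * k * n))))
      = altTensorIdx (2 * k * n)
          (finProdFinEquiv.trans (finCongr (by ring : n * (2 * k) = 2 * k * n))) := by
  have hsign : Equiv.Perm.sign (Equiv.prodCongr π (Equiv.refl (Fin (2 * k)))) = 1 := by
    rw [Equiv.prodCongr_refl_right, Equiv.Perm.sign_prodCongrLeft]
    rw [Finset.prod_const, Finset.card_univ, Fintype.card_fin, pow_mul]
    norm_num
  exact ⟨hsign, altTensorIdx_reindex_fixed _ _ _ hsign⟩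
end

section
/- Let k ≥ 2 be even and d ≥ 1. For every matrix X : Matrix (Fin d) (Fin d) ℂ, ∑_{σ ∈ Equiv.Perm (Fin d)} ∑_{τ ∈ Equiv.Perm (Fin d)} ((Equiv.Perm.sign ρ_{σ,τ} : ℤ) : ℂ) * ∏_{m} X (σ m) (τ m) = (d.factorial : ℂ) * Matrix.permanent X, where ρ_{σ,τ} ∈ Equiv.Perm (Fin d × Fin (2k)) is defined by ρ_{σ,τ} (m, t) = (σ m, t) if (t : ℕ) < k and (τ m, t) otherwise. (This is the evaluation of the hyperpfaffian pairing ⟨e_1 ∧ ⋯ ∧ e_{2kd}, p^{⊗ d}⟩ at the Barvinok point p, showing the d × d permanent is a projection of the hyperpfaffian Pf_{k,d} when k is even.) -/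
/-- The permutation `ρ_{σ,τ}` of `Fin d × Fin (2k)` acting as `σ` on the first coordinate
in the slice `t < k` and as `τ` on the first coordinate in the slice `t ≥ k`. -/
def rhoPerm {d : ℕ} (k : ℕ) (σ τ : Equiv.Perm (Fin d)) :
    Equiv.Perm (Fin d × Fin (2 * k)) where
  toFun p := (if (p.2 : ℕ) < k then σ p.1 else τ p.1, p.2)
  invFun p := (if (p.2 : ℕ) < k then σ.symm p.1 else τ.symm p.1, p.2)
  left_inv p := by by_cases h : (p.2 : ℕ) < k <;> simp [h]
  right_inv p := by by_cases h : (p.2 : ℕ) < k <;> simp [h]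

lemma rho_eq {d k : ℕ} (σ τ : Equiv.Perm (Fin d)) :
    rhoPerm k σ τ = Equiv.prodCongrLeft (fun t : Fin (2*k) => if (t:ℕ) < k then σ else τ) := by
  ext p <;> simp [rhoPerm, Equiv.prodCongrLeft, apply_ite (f := fun e : Equiv.Perm (Fin d) => e p.1)]

lemma card_lt {k : ℕ} (hk : 2 ≤ k) :
    (Finset.univ.filter fun t : Fin (2*k) => (t:ℕ) < k).card = k := by
  have hlt : k < 2 * k := by omega
  have : (Finset.univ.filter fun t : Fin (2*k) => (t:ℕ) < k) = Finset.Iio ⟨k, hlt⟩ := by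
    ext t; simp [Fin.lt_def]
  rw [this, Fin.card_Iio]

lemma sign_rho {d k : ℕ} (hk : 2 ≤ k) (hke : Even k) (σ τ : Equiv.Perm (Fin d)) :
    Equiv.Perm.sign (rhoPerm k σ τ) = 1 := by
  rw [rho_eq, Equiv.Perm.sign_prodCongrLeft]
  have : ∀ t : Fin (2*k), Equiv.Perm.sign (if (t:ℕ) < k then σ else τ)
      = if (t:ℕ) < k then Equiv.Perm.sign σ else Equiv.Perm.sign τ := by
    intro t; split <;> rfl
  simp_rw [this]
  rw [Finset.prod_ite, Finset.prod_const, Finset.prod_const, card_lt hk]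
  have h2 : (Finset.univ.filter fun t : Fin (2*k) => ¬ (t:ℕ) < k).card = k := by
    have := Finset.card_filter_add_card_filter_not
      (s := (Finset.univ : Finset (Fin (2*k)))) (p := fun t => (t:ℕ) < k)
    rw [card_lt hk, Finset.card_univ, Fintype.card_fin] at this
    omega
  rw [h2]
  obtain ⟨m, rfl⟩ := hke
  rw [pow_add, pow_add, ← mul_pow, ← mul_pow, Int.units_mul_self, Int.units_mul_self]
  simp

/-- For even `k ≥ 2`, the signed double sum over pairs of permutations, with signs given by
the block permutations `ρ_{σ,τ}` of `Fin d × Fin (2k)`, equals `d! · permanent X`: the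
`d × d` permanent is a projection of the hyperpfaffian `Pf_{k,d}`. -/
theorem signed_double_perm_sum_eq_factorial_mul_permanent (k d : ℕ)
    (hk : 2 ≤ k) (hke : Even k) (hd : 1 ≤ d) (X : Matrix (Fin d) (Fin d) ℂ) :
    (∑ σ : Equiv.Perm (Fin d), ∑ τ : Equiv.Perm (Fin d),
        ((Equiv.Perm.sign (rhoPerm k σ τ) : ℤ) : ℂ) * ∏ m : Fin d, X (σ m) (τ m))
      = (d.factorial : ℂ) * X.permanent := by
  have h1 : ∀ σ : Equiv.Perm (Fin d),
      (∑ τ : Equiv.Perm (Fin d),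
        ((Equiv.Perm.sign (rhoPerm k σ τ) : ℤ) : ℂ) * ∏ m : Fin d, X (σ m) (τ m))
      = X.permanent := by
    intro σ
    have : ∀ τ : Equiv.Perm (Fin d),
        (∏ m : Fin d, X (σ m) (τ m)) = ∏ n : Fin d, X ((σ * τ⁻¹) n) n := by
      intro τ
      rw [← Equiv.prod_comp τ (fun n => X ((σ * τ⁻¹) n) n)]
      simp [Equiv.Perm.mul_apply]
    simp_rw [sign_rho hk hke, this]
    simp only [Units.val_one, Int.cast_one, one_mul]
    rw [Matrix.permanent]
    exact Fintype.sum_equiv ((Equiv.inv (Equiv.Perm (Fin d))).trans (Equiv.mulLeft σ)) _ _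
      (fun τ => rfl)
  simp_rw [h1, Finset.sum_const, Finset.card_univ, Fintype.card_perm, Fintype.card_fin,
    nsmul_eq_mul]
end

section
/- Let k ≥ 1, n ≥ 1 and set N = 2kn. Let 0 < d < n. Then every SL_N(ℂ)-invariant polynomial p ∈ MvPolynomial ((Fin (2k)) → Fin N) ℂ that is homogeneous of degree d is the zero polynomial; i.e., the action of SL_{2kn}(ℂ) on ⊗^{2k} ℂ^{2kn} has no nonzero homogeneous invariant polynomials of degree strictly between 0 and n. -/
open MvPolynomial

/-- The `ℂ`-algebra endomorphism `φ_g` of the coordinate ring of `⊗^{2k} ℂ^N`, modeled as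
`MvPolynomial ((Fin (2k)) → Fin N) ℂ`, determined by
`X f ↦ ∑_h (∏_t g (f t) (h t)) • X h`; it encodes precomposition of polynomial functions
with the diagonal action of `g ∈ SL_N(ℂ)` on `⊗^{2k} ℂ^N`. -/
noncomputable def slSub {k N : ℕ} (g : Matrix.SpecialLinearGroup (Fin N) ℂ) :
    MvPolynomial (Fin (2 * k) → Fin N) ℂ →ₐ[ℂ] MvPolynomial (Fin (2 * k) → Fin N) ℂ :=
  aeval fun f : Fin (2 * k) → Fin N =>
    ∑ h : Fin (2 * k) → Fin N,
      (∏ t : Fin (2 * k), (g : Matrix (Fin N) (Fin N) ℂ) (f t) (h t)) • X h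

/-- A polynomial on `⊗^{2k} ℂ^N` is `SL_N(ℂ)`-invariant if it is fixed by `φ_g` for all
`g ∈ SL_N(ℂ)`. -/
def SLInvariant {k N : ℕ} (p : MvPolynomial (Fin (2 * k) → Fin N) ℂ) : Prop :=
  ∀ g : Matrix.SpecialLinearGroup (Fin N) ℂ, slSub g p = p

open Finset

section Aux
set_option linter.unusedSectionVars false
variable {σ : Type*} [DecidableEq σ]

lemma aeval_smulX_monomial (c : σ → ℂ) (u : σ →₀ ℕ) (a : ℂ) :
    aeval (fun i => c i • X i : σ → MvPolynomial σ ℂ) (monomial u a)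
      = monomial u ((u.prod fun i e => c i ^ e) * a) := by
  rw [aeval_monomial]
  have h1 : (u.prod fun i e => (c i • X i : MvPolynomial σ ℂ) ^ e)
      = C (u.prod fun i e => c i ^ e) * u.prod fun i e => (X i : MvPolynomial σ ℂ) ^ e := by
    rw [Finsupp.prod, Finsupp.prod, Finsupp.prod, map_prod, ← Finset.prod_mul_distrib]
    refine Finset.prod_congr rfl fun i _ => ?_
    rw [smul_pow, smul_eq_C_mul, C_pow]
  rw [h1, monomial_eq, algebraMap_eq, ← mul_assoc, ← C_mul, mul_comm a]

lemma coeff_aeval_smulX (c : σ → ℂ) (p : MvPolynomial σ ℂ) (m : σ →₀ ℕ) :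
    coeff m (aeval (fun i => c i • X i : σ → MvPolynomial σ ℂ) p)
      = (m.prod fun i e => c i ^ e) * coeff m p := by
  induction p using MvPolynomial.induction_on' with
  | monomial u a =>
    rw [aeval_smulX_monomial, coeff_monomial, coeff_monomial]
    split
    · next h => subst h; rfl
    · rw [mul_zero]
  | add p q hp hq => rw [map_add, coeff_add, coeff_add, hp, hq, mul_add]

lemma slSub_diag {k N : ℕ} (g : Matrix.SpecialLinearGroup (Fin N) ℂ)
    (v : Fin N → ℂ) (hg : (g : Matrix (Fin N) (Fin N) ℂ) = Matrix.diagonal v)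
    (p : MvPolynomial (Fin (2 * k) → Fin N) ℂ) :
    slSub g p = aeval (fun f : Fin (2 * k) → Fin N => (∏ s, v (f s)) • X f) p := by
  show aeval _ p = _
  have : (fun f : Fin (2 * k) → Fin N =>
      ∑ h : Fin (2 * k) → Fin N,
        (∏ t : Fin (2 * k), (g : Matrix (Fin N) (Fin N) ℂ) (f t) (h t)) • X h)
      = fun f : Fin (2 * k) → Fin N => (∏ s, v (f s)) • (X f : MvPolynomial (Fin (2*k) → Fin N) ℂ) := by
    funext f
    rw [Finset.sum_eq_single f]
    · congr 1
      refine Finset.prod_congr rfl fun s _ => ?_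
      rw [hg, Matrix.diagonal_apply_eq]
    · intro h _ hne
      obtain ⟨s, hs⟩ := Function.ne_iff.mp hne
      rw [Finset.prod_eq_zero (Finset.mem_univ s), zero_smul]
      rw [hg, Matrix.diagonal_apply_ne _ (Ne.symm hs)]
    · intro h; exact absurd (Finset.mem_univ f) h
  rw [this]

lemma prod_reindex {ι κ : Type*} [Fintype ι] [Fintype κ] [DecidableEq ι] [DecidableEq κ]
    (m : (ι → κ) →₀ ℕ) (v : κ → ℂ) :
    (m.prod fun f e => (∏ s, v (f s)) ^ e)
      = ∏ i : κ, v i ^ (∑ f : ι → κ, m f * (univ.filter fun s => f s = i).card) := by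
  rw [Finsupp.prod]
  have h0 : (∏ f ∈ m.support, (∏ s, v (f s)) ^ m f)
      = ∏ f : ι → κ, (∏ s, v (f s)) ^ m f := by
    refine Finset.prod_subset (subset_univ _) fun f _ hf => ?_
    rw [Finsupp.notMem_support_iff.mp hf, pow_zero]
  rw [h0]
  have h1 : ∀ f : ι → κ, (∏ s, v (f s)) = ∏ i : κ, v i ^ (univ.filter fun s => f s = i).card := by
    intro f
    rw [← Finset.prod_fiberwise_of_maps_to (fun s _ => mem_univ (f s)) (fun s => v (f s))]
    refine Finset.prod_congr rfl fun i _ => ?_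
    rw [Finset.prod_congr rfl (fun s hs => by rw [(mem_filter.mp hs).2]), prod_const]
  calc ∏ f : ι → κ, (∏ s, v (f s)) ^ m f
      = ∏ f : ι → κ, ∏ i : κ, v i ^ ((univ.filter fun s => f s = i).card * m f) := by
        refine Finset.prod_congr rfl fun f _ => ?_
        rw [h1 f, ← Finset.prod_pow]
        exact Finset.prod_congr rfl fun i _ => by rw [← pow_mul]
    _ = ∏ i : κ, ∏ f : ι → κ, v i ^ ((univ.filter fun s => f s = i).card * m f) :=
        Finset.prod_comm
    _ = _ := by
        refine Finset.prod_congr rfl fun i _ => ?_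
        rw [Finset.prod_pow_eq_pow_sum]
        congr 1
        exact Finset.sum_congr rfl fun f _ => mul_comm _ _

lemma eq_of_pow_prod {N : ℕ} (i j : Fin N) (hij : i ≠ j) (c : Fin N → ℕ)
    (h : ∏ x : Fin N, (if x = i then (2:ℂ) else if x = j then 2⁻¹ else 1) ^ c x = 1) :
    c i = c j := by
  have h2 : (∏ x ∈ ({i, j} : Finset (Fin N)),
      (if x = i then (2:ℂ) else if x = j then 2⁻¹ else 1) ^ c x) = 1 := by
    rw [Finset.prod_subset (subset_univ _) fun x _ hx => ?_]
    · exact h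
    · simp only [mem_insert, mem_singleton, not_or] at hx
      rw [if_neg hx.1, if_neg hx.2, one_pow]
  rw [Finset.prod_pair hij, if_pos rfl, if_neg (Ne.symm hij), if_pos rfl] at h2
  have h3 : (2:ℂ) ^ c i = 2 ^ c j := by
    have h4 : ((2:ℂ)⁻¹) ^ c j = ((2:ℂ) ^ c j)⁻¹ := by rw [inv_pow]
    rw [h4] at h2
    field_simp at h2
    exact h2
  have h5 : ((2 ^ c i : ℕ) : ℂ) = ((2 ^ c j : ℕ) : ℂ) := by push_cast; exact h3
  exact Nat.pow_right_injective le_rfl (Nat.cast_injective h5)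

end Aux

/-- For `N = 2kn`, the action of `SL_N(ℂ)` on `⊗^{2k} ℂ^N` has no nonzero homogeneous
invariant polynomials of degree strictly between `0` and `n`. -/
theorem no_SL_invariants_of_low_degree (k n : ℕ) (hk : 1 ≤ k) (hn : 1 ≤ n)
    (d : ℕ) (hd0 : 0 < d) (hdn : d < n)
    (p : MvPolynomial (Fin (2 * k) → Fin (2 * k * n)) ℂ)
    (hinv : SLInvariant p) (hhom : p.IsHomogeneous d) :
    p = 0 := by
  by_contra hp
  obtain ⟨m, hm⟩ := ne_zero_iff.mp hp
  have hN2 : 2 ≤ 2 * k * n := by nlinarith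
  set c : Fin (2 * k * n) → ℕ :=
    fun i => ∑ f : Fin (2 * k) → Fin (2 * k * n), m f * (univ.filter fun s => f s = i).card
    with hc
  -- all c equal
  have hceq : ∀ i j : Fin (2 * k * n), c i = c j := by
    have key : ∀ i j : Fin (2 * k * n), i ≠ j → c i = c j := by
      intro i j hij
      set v : Fin (2 * k * n) → ℂ := fun x => if x = i then (2:ℂ) else if x = j then 2⁻¹ else 1
        with hv
      have hdet : (Matrix.diagonal v).det = 1 := by
        rw [Matrix.det_diagonal]
        have : (∏ x ∈ ({i, j} : Finset (Fin (2 * k * n))), v x) = ∏ x, v x := by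
          refine Finset.prod_subset (subset_univ _) fun x _ hx => ?_
          simp only [mem_insert, mem_singleton, not_or] at hx
          rw [hv]; simp only [if_neg hx.1, if_neg hx.2]
        rw [← this, Finset.prod_pair hij, hv]
        simp only [if_pos rfl, if_neg (Ne.symm hij)]
        norm_num
      set g : Matrix.SpecialLinearGroup (Fin (2 * k * n)) ℂ := ⟨Matrix.diagonal v, hdet⟩
      have hstep := hinv g
      rw [slSub_diag g v rfl] at hstep
      have hco := congrArg (coeff m) hstep
      rw [coeff_aeval_smulX] at hco
      have hprod1 : (m.prod fun f e => (∏ s, v (f s)) ^ e) = 1 := by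
        have := mul_right_cancel₀ hm (hco.trans (one_mul (coeff m p)).symm)
        exact this
      rw [prod_reindex] at hprod1
      exact eq_of_pow_prod i j hij c hprod1
    intro i j
    rcases eq_or_ne i j with h | h
    · rw [h]
    · exact key i j h
  -- sum of c
  have hdeg : m.degree = d := by
    have := hhom hm
    rw [Finsupp.degree_eq_weight_one]; exact this
  have hsum : ∑ i : Fin (2 * k * n), c i = d * (2 * k) := by
    rw [Finset.sum_comm]
    have : ∀ f : Fin (2 * k) → Fin (2 * k * n),
        ∑ i : Fin (2 * k * n), m f * (univ.filter fun s => f s = i).card = m f * (2 * k) := by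
      intro f
      rw [← Finset.mul_sum]
      congr 1
      have := Finset.card_eq_sum_card_fiberwise (fun s (_ : s ∈ (univ : Finset (Fin (2*k)))) => mem_univ (f s))
      rw [← this, Finset.card_univ, Fintype.card_fin]
    rw [Finset.sum_congr rfl fun f _ => this f, ← Finset.sum_mul]
    congr 1
    rw [← hdeg, Finsupp.degree]
    refine (Finset.sum_subset (subset_univ _) fun f _ hf => ?_).symm
    exact Finsupp.notMem_support_iff.mp hf
  -- derive contradiction
  obtain ⟨i0⟩ : Nonempty (Fin (2 * k * n)) := ⟨⟨0, by omega⟩⟩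
  have hconst : ∑ i : Fin (2 * k * n), c i = (2 * k * n) * c i0 := by
    rw [Finset.sum_congr rfl fun i _ => hceq i i0, Finset.sum_const, Finset.card_univ,
      Fintype.card_fin, smul_eq_mul]
  rw [hconst] at hsum
  -- 2kn * c = d * 2k  →  n * c = d
  have h2k : 0 < 2 * k := by omega
  have hnc : n * c i0 = d := by
    have : (2 * k) * (n * c i0) = (2 * k) * d := by ring_nf; ring_nf at hsum; omega
    exact Nat.eq_of_mul_eq_mul_left h2k this
  rcases Nat.eq_zero_or_pos (c i0) with h | h
  · rw [h, mul_zero] at hnc; omega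
  · have : n ≤ n * c i0 := Nat.le_mul_of_pos_right n h
    omega
end
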